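/- arXiv:2402.02664 — 2 statements merged into one kernel-verified Lean document; each statement's English description precedes it below -/
import Mathlib

section
/- Let p ≥ 1 and k ≥ 1. Let X_{t−1}, …, X_{t−p} and X_{t−k} be square-integrable nonnegative integer-valued random variables. Suppose X_t = Σ_{j=1}^{p} Σ_{m=1}^{X_{t−j}} Y^{(j)}_m + ε_t, where for each j the (Y^{(j)}_m)_{m≥1} are iid square-integrable with mean α_j, ε_t is square-integrable, and the combined family ((Y^{(j)}_m)_{j,m}, ε_t) is independent of the random vector (X_{t−1}, …, X_{t−p}, X_{t−k}). Then Cov(X_t, X_{t−k}) = Σ_{j=1}^{p} α_j Cov(X_{t−j}, X_{t−k}). (Paper's Lemma 2, autocovariance recursion: γ_X(k) = Σ_{j=1}^{p} α_j γ_X(k−j) for k ≠ 0.) -/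
open MeasureTheory ProbabilityTheory

open scoped ENNReal NNReal

lemma ginar_core {Ω : Type*} [MeasurableSpace Ω]
    (μ : Measure Ω) [IsProbabilityMeasure μ]
    (p : ℕ)
    (X : Fin p → Ω → ℕ) (Xk : Ω → ℕ)
    (Y : Fin p → ℕ → Ω → ℕ) (ε : Ω → ℕ) (α : Fin p → ℝ)
    (hXmeas : ∀ j, Measurable (X j)) (hXkmeas : Measurable Xk)
    (hYmeas : ∀ j m, Measurable (Y j m)) (hεmeas : Measurable ε)
    (hY1 : ∀ j m, Integrable (fun ω => (Y j m ω : ℝ)) μ)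
    (hYmean : ∀ j m, ∫ ω, (Y j m ω : ℝ) ∂μ = α j)
    (hindep : IndepFun
      (fun ω => ((fun jm : Fin p × ℕ => Y jm.1 jm.2 ω), ε ω))
      (fun ω => ((fun j => X j ω), Xk ω)) μ)
    (ψ : ((Fin p → ℕ) × ℕ) → ℕ) (hψ : Measurable ψ) :
    (∫⁻ ω, (((∑ j, ∑ m ∈ Finset.Icc 1 (X j ω), Y j m ω) + ε ω : ℕ) : ℝ≥0∞)
        * (ψ ((fun j => X j ω), Xk ω) : ℝ≥0∞) ∂μ)
      = (∑ j, ENNReal.ofReal (α j)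
            * ∫⁻ ω, (X j ω : ℝ≥0∞) * (ψ ((fun j => X j ω), Xk ω) : ℝ≥0∞) ∂μ)
          + (∫⁻ ω, (ε ω : ℝ≥0∞) ∂μ)
            * ∫⁻ ω, (ψ ((fun j => X j ω), Xk ω) : ℝ≥0∞) ∂μ := by
  classical
  set V : Ω → (Fin p → ℕ) × ℕ := fun ω => ((fun j => X j ω), Xk ω) with hV
  have hVmeas : Measurable V :=
    (measurable_pi_lambda _ fun j => hXmeas j).prodMk hXkmeas
  set W : Ω → ℝ≥0∞ := fun ω => (ψ (V ω) : ℝ≥0∞) with hW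
  have hWmeas : Measurable W :=
    (measurable_from_top (f := fun n : ℕ => (n : ℝ≥0∞))).comp (hψ.comp hVmeas)
  -- measurable sets
  have hmem : ∀ (j : Fin p) (m : ℕ), MeasurableSet {ω | m ∈ Finset.Icc 1 (X j ω)} := by
    intro j m
    exact hXmeas j (show MeasurableSet {n : ℕ | m ∈ Finset.Icc 1 n} from .of_discrete)
  -- F and G
  set F : Fin p → ℕ → Ω → ℝ≥0∞ :=
    fun j m ω => (if m ∈ Finset.Icc 1 (X j ω) then (Y j m ω : ℝ≥0∞) else 0) * W ω with hF
  set G : Fin p → ℕ → Ω → ℝ≥0∞ :=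
    fun j m ω => if m ∈ Finset.Icc 1 (X j ω) then W ω else 0 with hG
  have hGmeas : ∀ j m, Measurable (G j m) := fun j m =>
    Measurable.ite (hmem j m) hWmeas measurable_const
  have hFmeas : ∀ j m, Measurable (F j m) := fun j m =>
    (Measurable.ite (hmem j m)
      ((measurable_from_top (f := fun n : ℕ => (n : ℝ≥0∞))).comp (hYmeas j m))
      measurable_const).mul hWmeas
  -- pointwise rewrite of the integrand
  have hpt : ∀ ω,
      (((∑ j, ∑ m ∈ Finset.Icc 1 (X j ω), Y j m ω) + ε ω : ℕ) : ℝ≥0∞) * W ω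
        = (∑ j, ∑' m, F j m ω) + (ε ω : ℝ≥0∞) * W ω := by
    intro ω
    push_cast
    rw [add_mul, Finset.sum_mul]
    congr 1
    refine Finset.sum_congr rfl fun j _ => ?_
    have hts : ∑' m, F j m ω = ∑ m ∈ Finset.Icc 1 (X j ω), F j m ω :=
      tsum_eq_sum (by intro m hm; simp only [hF, if_neg hm, zero_mul])
    rw [hts, ← Finset.sum_mul]
    congr 1
    refine Finset.sum_congr rfl fun m hm => ?_
    simp only [hF, if_pos hm]
  -- independence consequences
  have hindY : ∀ (j : Fin p) (m : ℕ),
      IndepFun (fun ω => (Y j m ω : ℝ≥0∞)) (G j m) μ := by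
    intro j m
    have h1 : Measurable (fun q : (Fin p × ℕ → ℕ) × ℕ => (q.1 (j, m) : ℝ≥0∞)) :=
      (measurable_from_top (f := fun n : ℕ => (n : ℝ≥0∞))).comp
        ((measurable_pi_apply _).comp measurable_fst)
    have h2 : Measurable (fun q : (Fin p → ℕ) × ℕ =>
        if m ∈ Finset.Icc 1 (q.1 j) then (ψ q : ℝ≥0∞) else 0) := by
      have hmq : Measurable fun q : (Fin p → ℕ) × ℕ => q.1 j :=
        (measurable_pi_apply j).comp measurable_fst
      have hs : MeasurableSet {q : (Fin p → ℕ) × ℕ | m ∈ Finset.Icc 1 (q.1 j)} :=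
        hmq (show MeasurableSet {n : ℕ | m ∈ Finset.Icc 1 n} from .of_discrete)
      exact Measurable.ite hs ((measurable_from_top
        (f := fun n : ℕ => (n : ℝ≥0∞))).comp hψ) measurable_const
    exact hindep.comp h1 h2
  have hindε : IndepFun (fun ω => (ε ω : ℝ≥0∞)) W μ := by
    have h1 : Measurable (fun q : (Fin p × ℕ → ℕ) × ℕ => (q.2 : ℝ≥0∞)) :=
      (measurable_from_top (f := fun n : ℕ => (n : ℝ≥0∞))).comp measurable_snd
    have h2 : Measurable (fun q : (Fin p → ℕ) × ℕ => (ψ q : ℝ≥0∞)) :=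
      (measurable_from_top (f := fun n : ℕ => (n : ℝ≥0∞))).comp hψ
    exact hindep.comp h1 h2
  -- mean of Y in ℝ≥0∞
  have hYlint : ∀ (j : Fin p) (m : ℕ),
      ∫⁻ ω, (Y j m ω : ℝ≥0∞) ∂μ = ENNReal.ofReal (α j) := by
    intro j m
    rw [← hYmean j m,
      ofReal_integral_eq_lintegral_ofReal (hY1 j m) (Filter.Eventually.of_forall fun ω => by positivity)]
    simp [ENNReal.ofReal_natCast]
  -- main computation
  calc
    ∫⁻ ω, (((∑ j, ∑ m ∈ Finset.Icc 1 (X j ω), Y j m ω) + ε ω : ℕ) : ℝ≥0∞) * W ω ∂μ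
        = ∫⁻ ω, (∑ j, ∑' m, F j m ω) + (ε ω : ℝ≥0∞) * W ω ∂μ := by
          exact lintegral_congr hpt
    _ = (∑ j, ∫⁻ ω, ∑' m, F j m ω ∂μ) + ∫⁻ ω, (ε ω : ℝ≥0∞) * W ω ∂μ := by
          rw [lintegral_add_left, lintegral_finset_sum]
          · exact fun j _ => Measurable.ennreal_tsum (hFmeas j)
          · exact Finset.measurable_sum _ fun j _ => Measurable.ennreal_tsum (hFmeas j)
    _ = (∑ j, ENNReal.ofReal (α j) * ∫⁻ ω, (X j ω : ℝ≥0∞) * W ω ∂μ)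
          + (∫⁻ ω, (ε ω : ℝ≥0∞) ∂μ) * ∫⁻ ω, W ω ∂μ := by
          congr 1
          · refine Finset.sum_congr rfl fun j _ => ?_
            rw [lintegral_tsum (fun m => (hFmeas j m).aemeasurable)]
            have hFG : ∀ m, ∫⁻ ω, F j m ω ∂μ
                = ENNReal.ofReal (α j) * ∫⁻ ω, G j m ω ∂μ := by
              intro m
              have : ∀ ω, F j m ω = (Y j m ω : ℝ≥0∞) * G j m ω := by
                intro ω
                simp only [hF, hG]
                by_cases h : m ∈ Finset.Icc 1 (X j ω) <;> simp [h]
              calc ∫⁻ ω, F j m ω ∂μ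
                  = ∫⁻ ω, ((fun ω => (Y j m ω : ℝ≥0∞)) * G j m) ω ∂μ := by
                    exact lintegral_congr fun ω => this ω
                _ = (∫⁻ ω, (Y j m ω : ℝ≥0∞) ∂μ) * ∫⁻ ω, G j m ω ∂μ :=
                    lintegral_mul_eq_lintegral_mul_lintegral_of_indepFun
                      ((measurable_from_top (f := fun n : ℕ => (n : ℝ≥0∞))).comp (hYmeas j m))
                      (hGmeas j m) (hindY j m)
                _ = ENNReal.ofReal (α j) * ∫⁻ ω, G j m ω ∂μ := by rw [hYlint]
            simp_rw [hFG]
            rw [ENNReal.tsum_mul_left, ← lintegral_tsum (fun m => (hGmeas j m).aemeasurable)]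
            congr 1
            refine lintegral_congr fun ω => ?_
            have hts : ∑' m, G j m ω = ∑ m ∈ Finset.Icc 1 (X j ω), G j m ω :=
              tsum_eq_sum (by intro m hm; simp only [hG, if_neg hm])
            rw [hts]
            have : ∀ m ∈ Finset.Icc 1 (X j ω), G j m ω = W ω := by
              intro m hm; simp only [hG, if_pos hm]
            rw [Finset.sum_congr rfl this, Finset.sum_const, Nat.card_Icc]
            simp [nsmul_eq_mul]
          · calc ∫⁻ ω, (ε ω : ℝ≥0∞) * W ω ∂μ
                = ∫⁻ ω, ((fun ω => (ε ω : ℝ≥0∞)) * W) ω ∂μ := rfl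
              _ = (∫⁻ ω, (ε ω : ℝ≥0∞) ∂μ) * ∫⁻ ω, W ω ∂μ :=
                  lintegral_mul_eq_lintegral_mul_lintegral_of_indepFun
                    ((measurable_from_top (f := fun n : ℕ => (n : ℝ≥0∞))).comp hεmeas)
                    hWmeas hindε



/-- Paper's Lemma 2, autocovariance recursion of a GINAR(p) process:
`Cov(X_t, X_{t−k}) = Σ_{j=1}^{p} α_j Cov(X_{t−j}, X_{t−k})`, i.e.
`γ_X(k) = Σ_{j=1}^{p} α_j γ_X(k−j)` for lags `k ≠ 0`.  Here `X j` denotes the lagged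
value `X_{t−(j+1)}`, `Xk` denotes `X_{t−k}`, the structural equation
`X_t = Σ_j Σ_{m=1}^{X_{t−j}} Y^{(j)}_m + ε_t` holds, the `(Y j m)_m` are iid with
mean `α j`, and the combined family `((Y j m)_{j,m}, ε)` is independent of the vector
`(X_{t−1}, …, X_{t−p}, X_{t−k})`.  Covariances are written as
`Cov(U, V) = E[UV] − E[U]E[V]`. -/
theorem ginar_autocovariance_recursion {Ω : Type*} [MeasurableSpace Ω]
    (μ : Measure Ω) [IsProbabilityMeasure μ]
    (p : ℕ) (hp : 1 ≤ p) (k : ℕ) (hk : 1 ≤ k)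
    (Xt : Ω → ℕ) (X : Fin p → Ω → ℕ) (Xk : Ω → ℕ)
    (Y : Fin p → ℕ → Ω → ℕ) (ε : Ω → ℕ) (α : Fin p → ℝ)
    (hXtmeas : Measurable Xt) (hXmeas : ∀ j, Measurable (X j)) (hXkmeas : Measurable Xk)
    (hYmeas : ∀ j m, Measurable (Y j m)) (hεmeas : Measurable ε)
    (hX2 : ∀ j, MemLp (fun ω => (X j ω : ℝ)) 2 μ)
    (hXk2 : MemLp (fun ω => (Xk ω : ℝ)) 2 μ)
    (hY2 : ∀ j m, MemLp (fun ω => (Y j m ω : ℝ)) 2 μ)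
    (hε2 : MemLp (fun ω => (ε ω : ℝ)) 2 μ)
    (hstruct : ∀ ω, Xt ω = (∑ j, ∑ m ∈ Finset.Icc 1 (X j ω), Y j m ω) + ε ω)
    (hYiid : ∀ j, iIndepFun (Y j) μ)
    (hYident : ∀ j m, IdentDistrib (Y j m) (Y j 0) μ μ)
    (hYmean : ∀ j m, ∫ ω, (Y j m ω : ℝ) ∂μ = α j)
    (hindep : IndepFun
      (fun ω => ((fun jm : Fin p × ℕ => Y jm.1 jm.2 ω), ε ω))
      (fun ω => ((fun j => X j ω), Xk ω)) μ) :
    (∫ ω, (Xt ω : ℝ) * (Xk ω : ℝ) ∂μ)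
        - (∫ ω, (Xt ω : ℝ) ∂μ) * (∫ ω, (Xk ω : ℝ) ∂μ)
      = ∑ j, α j * ((∫ ω, (X j ω : ℝ) * (Xk ω : ℝ) ∂μ)
          - (∫ ω, (X j ω : ℝ) ∂μ) * (∫ ω, (Xk ω : ℝ) ∂μ)) := by
  classical
  have hY1 : ∀ j m, Integrable (fun ω => (Y j m ω : ℝ)) μ :=
    fun j m => (hY2 j m).integrable one_le_two
  have hX1 : ∀ j, Integrable (fun ω => (X j ω : ℝ)) μ :=
    fun j => (hX2 j).integrable one_le_two
  have hXk1 : Integrable (fun ω => (Xk ω : ℝ)) μ := hXk2.integrable one_le_two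
  have hε1 : Integrable (fun ω => (ε ω : ℝ)) μ := hε2.integrable one_le_two
  have hαnn : ∀ j, 0 ≤ α j := fun j =>
    (hYmean j 0) ▸ integral_nonneg (fun ω => by positivity)
  have hXr : ∀ j, Measurable fun ω => (X j ω : ℝ) :=
    fun j => (measurable_from_top (f := fun n : ℕ => (n : ℝ))).comp (hXmeas j)
  have hXkr : Measurable fun ω => (Xk ω : ℝ) :=
    (measurable_from_top (f := fun n : ℕ => (n : ℝ))).comp hXkmeas
  have hXtr : Measurable fun ω => (Xt ω : ℝ) :=
    (measurable_from_top (f := fun n : ℕ => (n : ℝ))).comp hXtmeas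
  have hXXk1 : ∀ j, Integrable (fun ω => (X j ω : ℝ) * (Xk ω : ℝ)) μ := by
    intro j
    refine Integrable.mono' (((hX2 j).integrable_sq).add hXk2.integrable_sq)
      (((hXr j).mul hXkr).aestronglyMeasurable)
      (Filter.Eventually.of_forall fun ω => ?_)
    have h1 : (0:ℝ) ≤ (X j ω : ℝ) * (Xk ω : ℝ) := by positivity
    simp only [Pi.add_apply]
    rw [Real.norm_eq_abs, abs_of_nonneg h1]
    nlinarith [sq_nonneg ((X j ω : ℝ) - (Xk ω : ℝ))]
  -- conversions between Bochner integrals and lintegrals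
  have key : ∀ (f : Ω → ℕ), Integrable (fun ω => (f ω : ℝ)) μ →
      ∫⁻ ω, (f ω : ℝ≥0∞) ∂μ = ENNReal.ofReal (∫ ω, (f ω : ℝ) ∂μ) := by
    intro f hint
    rw [ofReal_integral_eq_lintegral_ofReal hint
      (Filter.Eventually.of_forall fun ω => by positivity)]
    simp [ENNReal.ofReal_natCast]
  have key2 : ∀ (f g : Ω → ℕ), Integrable (fun ω => (f ω : ℝ) * (g ω : ℝ)) μ →
      ∫⁻ ω, (f ω : ℝ≥0∞) * (g ω : ℝ≥0∞) ∂μ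
        = ENNReal.ofReal (∫ ω, (f ω : ℝ) * (g ω : ℝ) ∂μ) := by
    intro f g hint
    rw [ofReal_integral_eq_lintegral_ofReal hint
      (Filter.Eventually.of_forall fun ω => by positivity)]
    refine lintegral_congr fun ω => ?_
    rw [ENNReal.ofReal_mul (by positivity), ENNReal.ofReal_natCast, ENNReal.ofReal_natCast]
  -- the two applications of the core lemma
  have hcore1 := ginar_core μ p X Xk Y ε α hXmeas hXkmeas hYmeas hεmeas hY1 hYmean hindep
    Prod.snd measurable_snd
  have hcore2 := ginar_core μ p X Xk Y ε α hXmeas hXkmeas hYmeas hεmeas hY1 hYmean hindep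
    (fun _ => 1) measurable_const
  have hsnd : ∀ ω, (Prod.snd ((fun j => X j ω), Xk ω) : ℕ) = Xk ω := fun _ => rfl
  simp only [hsnd] at hcore1
  simp only [Nat.cast_one, mul_one, lintegral_one, measure_univ] at hcore2
  simp only [← hstruct] at hcore1 hcore2
  -- express everything via real integrals
  have e1 : ∀ j, ∫⁻ ω, (X j ω : ℝ≥0∞) * (Xk ω : ℝ≥0∞) ∂μ
      = ENNReal.ofReal (∫ ω, (X j ω : ℝ) * (Xk ω : ℝ) ∂μ) := fun j => key2 _ _ (hXXk1 j)
  have e2 : ∀ j, ∫⁻ ω, (X j ω : ℝ≥0∞) ∂μ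
      = ENNReal.ofReal (∫ ω, (X j ω : ℝ) ∂μ) := fun j => key _ (hX1 j)
  rw [key ε hε1, key Xk hXk1] at hcore1
  rw [key ε hε1] at hcore2
  simp only [e1] at hcore1
  simp only [e2] at hcore2
  -- convert the Bochner integrals involving Xt
  have eXtXk : ∫ ω, (Xt ω : ℝ) * (Xk ω : ℝ) ∂μ
      = (∫⁻ ω, (Xt ω : ℝ≥0∞) * (Xk ω : ℝ≥0∞) ∂μ).toReal := by
    rw [integral_eq_lintegral_of_nonneg_ae (f := fun ω => (Xt ω : ℝ) * (Xk ω : ℝ))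
      (Filter.Eventually.of_forall fun ω => by positivity)
      ((hXtr.mul hXkr).aestronglyMeasurable)]
    congr 1
    exact lintegral_congr fun ω => by
      rw [ENNReal.ofReal_mul (by positivity), ENNReal.ofReal_natCast, ENNReal.ofReal_natCast]
  have eXt : ∫ ω, (Xt ω : ℝ) ∂μ = (∫⁻ ω, (Xt ω : ℝ≥0∞) ∂μ).toReal := by
    rw [integral_eq_lintegral_of_nonneg_ae
      (Filter.Eventually.of_forall fun ω => by positivity)
      hXtr.aestronglyMeasurable]
    congr 1
    exact lintegral_congr fun ω => (ENNReal.ofReal_natCast _)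
  -- nonnegativity of the real integrals
  have nnI : ∀ x : Fin p, 0 ≤ ∫ ω, (X x ω : ℝ) * (Xk ω : ℝ) ∂μ :=
    fun x => integral_nonneg fun ω => by positivity
  have nnB : ∀ x : Fin p, 0 ≤ ∫ ω, (X x ω : ℝ) ∂μ :=
    fun x => integral_nonneg fun ω => by positivity
  have nnc : 0 ≤ ∫ ω, (Xk ω : ℝ) ∂μ := integral_nonneg fun ω => by positivity
  have nne : 0 ≤ ∫ ω, (ε ω : ℝ) ∂μ := integral_nonneg fun ω => by positivity
  have h1 : ENNReal.ofReal (∑ x, α x * ∫ ω, (X x ω : ℝ) * (Xk ω : ℝ) ∂μ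
        + (∫ ω, (ε ω : ℝ) ∂μ) * ∫ ω, (Xk ω : ℝ) ∂μ)
      = ∑ x, ENNReal.ofReal (α x) * ENNReal.ofReal (∫ ω, (X x ω : ℝ) * (Xk ω : ℝ) ∂μ)
        + ENNReal.ofReal (∫ ω, (ε ω : ℝ) ∂μ) * ENNReal.ofReal (∫ ω, (Xk ω : ℝ) ∂μ) := by
    rw [ENNReal.ofReal_add (Finset.sum_nonneg fun x _ => mul_nonneg (hαnn x) (nnI x))
      (mul_nonneg nne nnc), ENNReal.ofReal_sum_of_nonneg
        (fun x _ => mul_nonneg (hαnn x) (nnI x)), ENNReal.ofReal_mul nne]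
    congr 1
    exact Finset.sum_congr rfl fun x _ => ENNReal.ofReal_mul (hαnn x)
  have h2 : ENNReal.ofReal (∑ x, α x * ∫ ω, (X x ω : ℝ) ∂μ + ∫ ω, (ε ω : ℝ) ∂μ)
      = ∑ x, ENNReal.ofReal (α x) * ENNReal.ofReal (∫ ω, (X x ω : ℝ) ∂μ)
        + ENNReal.ofReal (∫ ω, (ε ω : ℝ) ∂μ) := by
    rw [ENNReal.ofReal_add (Finset.sum_nonneg fun x _ => mul_nonneg (hαnn x) (nnB x)) nne,
      ENNReal.ofReal_sum_of_nonneg (fun x _ => mul_nonneg (hαnn x) (nnB x))]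
    congr 1
    exact Finset.sum_congr rfl fun x _ => ENNReal.ofReal_mul (hαnn x)
  rw [eXtXk, eXt, hcore1, hcore2, ← h1, ← h2,
    ENNReal.toReal_ofReal (add_nonneg (Finset.sum_nonneg fun x _ =>
      mul_nonneg (hαnn x) (nnI x)) (mul_nonneg nne nnc)),
    ENNReal.toReal_ofReal (add_nonneg (Finset.sum_nonneg fun x _ =>
      mul_nonneg (hαnn x) (nnB x)) nne)]
  rw [add_mul, Finset.sum_mul]
  simp only [mul_sub, Finset.sum_sub_distrib, mul_assoc]
  ring
end

section
/- Let p ≥ 1 and let (X_s)_s be square-integrable nonnegative integer-valued random variables that are second-order stationary: E[X_s] = μ_X for all s and Cov(X_s, X_{s+h}) = γ(|h|) depends only on the lag |h|. Suppose at time t the structural equation X_t = Σ_{j=1}^{p} Σ_{m=1}^{X_{t−j}} Y^{(j)}_m + ε_t holds, where for each j the (Y^{(j)}_m)_{m≥1} are iid square-integrable with mean α_j and variance β_j, ε_t is square-integrable with variance σ²_ε, the families (Y^{(1)}_m)_m, …, (Y^{(p)}_m)_m, ε_t are mutually independent, and the combined family is independent of (X_{t−1}, …, X_{t−p}), and suppose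 the autocovariance recursion γ(k) = Σ_{j=1}^{p} α_j γ(|k−j|) holds for k = 1, …, p. Then the variance of the process satisfies γ(0) = Σ_{j=1}^{p} α_j γ(j) + Σ_{j=1}^{p} β_j μ_X + σ²_ε; equivalently, if Σ_{j=1}^{p} α_j ρ(j) < 1 with ρ(j) = γ(j)/γ(0), then γ(0) = (Σ_{j=1}^{p} β_j μ_X + σ²_ε)/(1 − Σ_{j=1}^{p} α_j ρ(j)). (Paper's Lemma 2, marginal variance of a GINAR(p) process.) -/
open MeasureTheory ProbabilityTheory

/-- Paper's Lemma 2, marginal variance of a GINAR(p) process.  For a second-order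
stationary process `(X s)_{s ∈ ℤ}` with mean `μ_X` and autocovariance function
`γ(|h|) = Cov(X s, X (s+h))`, satisfying at time `t` the structural equation
`X t = Σ_{j=1}^{p} Σ_{m=1}^{X (t−j)} Y^{(j)}_m + ε` with the `(Y j m)_m` iid of mean
`α j` and variance `β j`, the families `(Y 1 m)_m, …, (Y p m)_m, ε` mutually
independent and jointly independent of `(X (t−1), …, X (t−p))`, `ε` of variance
`σ²_ε`, and the autocovariance recursion `γ(k) = Σ_j α_j γ(|k−j|)` for `k = 1, …, p`,
the variance satisfies `γ(0) = Σ_j α_j γ(j) + Σ_j β_j μ_X + σ²_ε`; equivalently, if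
`Σ_j α_j ρ(j) < 1` with `ρ(j) = γ(j)/γ(0)`, then
`γ(0) = (Σ_j β_j μ_X + σ²_ε)/(1 − Σ_j α_j ρ(j))`.  (Here `j : Fin p` corresponds to
the lag `j+1`.) -/
theorem ginar_marginal_variance {Ω : Type*} [MeasurableSpace Ω]
    (μ : Measure Ω) [IsProbabilityMeasure μ]
    (p : ℕ) (hp : 1 ≤ p) (t : ℤ)
    (X : ℤ → Ω → ℕ) (Y : Fin p → ℕ → Ω → ℕ) (ε : Ω → ℕ)
    (α β : Fin p → ℝ) (μX σε2 : ℝ) (γ : ℕ → ℝ)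
    (hXmeas : ∀ s, Measurable (X s)) (hYmeas : ∀ j m, Measurable (Y j m))
    (hεmeas : Measurable ε)
    (hX2 : ∀ s, MemLp (fun ω => (X s ω : ℝ)) 2 μ)
    (hY2 : ∀ j m, MemLp (fun ω => (Y j m ω : ℝ)) 2 μ)
    (hε2 : MemLp (fun ω => (ε ω : ℝ)) 2 μ)
    -- second-order stationarity
    (hXmean : ∀ s, ∫ ω, (X s ω : ℝ) ∂μ = μX)
    (hXcov : ∀ s h : ℤ,
      (∫ ω, (X s ω : ℝ) * (X (s + h) ω : ℝ) ∂μ)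
          - (∫ ω, (X s ω : ℝ) ∂μ) * (∫ ω, (X (s + h) ω : ℝ) ∂μ)
        = γ h.natAbs)
    -- structural equation at time `t`
    (hstruct : ∀ ω,
      X t ω = (∑ j : Fin p, ∑ m ∈ Finset.Icc 1 (X (t - ((j : ℕ) + 1)) ω), Y j m ω) + ε ω)
    (hYiid : ∀ j, iIndepFun (Y j) μ)
    (hYident : ∀ j m, IdentDistrib (Y j m) (Y j 0) μ μ)
    (hYmean : ∀ j m, ∫ ω, (Y j m ω : ℝ) ∂μ = α j)
    (hYvar : ∀ j m, variance (fun ω => (Y j m ω : ℝ)) μ = β j)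
    (hεvar : variance (fun ω => (ε ω : ℝ)) μ = σε2)
    (hmut : iIndep (fun i : Option (Fin p) =>
      Option.elim i (MeasurableSpace.comap ε inferInstance)
        (fun j => MeasurableSpace.comap (fun ω m => Y j m ω) MeasurableSpace.pi)) μ)
    (hindep : IndepFun
      (fun ω => ((fun jm : Fin p × ℕ => Y jm.1 jm.2 ω), ε ω))
      (fun ω => fun j : Fin p => X (t - ((j : ℕ) + 1)) ω) μ)
    -- autocovariance recursion for lags `k = 1, …, p`
    (hrec : ∀ k : ℕ, 1 ≤ k → k ≤ p →
      γ k = ∑ j : Fin p, α j * γ ((k : ℤ) - ((j : ℕ) + 1)).natAbs) :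
    γ 0 = (∑ j, α j * γ ((j : ℕ) + 1)) + ((∑ j, β j * μX) + σε2) ∧
      ((∑ j, α j * (γ ((j : ℕ) + 1) / γ 0)) < 1 →
        γ 0 = ((∑ j, β j * μX) + σε2) / (1 - ∑ j, α j * (γ ((j : ℕ) + 1) / γ 0))) := by
  classical
  have hL2mul : ∀ (f g : Ω → ℝ), MemLp f 2 μ → MemLp g 2 μ →
      Integrable (fun ω => f ω * g ω) μ := by
    intro f g hf hg
    exact hf.integrable_mul hg
  have hzero : γ 0 = 0 → ∀ h : ℤ, γ h.natAbs = 0 := by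
    have hL2mul : ∀ (f g : Ω → ℝ), MemLp f 2 μ → MemLp g 2 μ →
        Integrable (fun ω => f ω * g ω) μ := by
      intro f g hf hg
      exact hf.integrable_mul hg
    have hcov2 : ∀ s h : ℤ,
        ∫ ω, ((X s ω : ℝ) - μX) * ((X (s + h) ω : ℝ) - μX) ∂μ = γ h.natAbs := by
      intro s h
      have h1 := hXcov s h
      rw [hXmean s, hXmean (s + h)] at h1
      have expand : (fun ω => ((X s ω : ℝ) - μX) * ((X (s + h) ω : ℝ) - μX))
          = fun ω => (X s ω : ℝ) * (X (s + h) ω : ℝ) - μX * (X s ω : ℝ)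
              - μX * (X (s + h) ω : ℝ) + μX * μX := funext fun ω => by ring
      rw [expand, integral_add, integral_sub, integral_sub, integral_const_mul,
        integral_const_mul, integral_const, hXmean s, hXmean (s + h)]
      · simp only [measure_univ, probReal_univ, ENNReal.toReal_one, smul_eq_mul, one_mul]
        linarith
      · exact hL2mul _ _ (hX2 s) (hX2 (s + h))
      · exact ((hX2 s).integrable one_le_two).const_mul μX
      · exact (hL2mul _ _ (hX2 s) (hX2 (s + h))).sub
          (((hX2 s).integrable one_le_two).const_mul μX)
      · exact ((hX2 (s + h)).integrable one_le_two).const_mul μX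
      · exact ((hL2mul _ _ (hX2 s) (hX2 (s + h))).sub
          (((hX2 s).integrable one_le_two).const_mul μX)).sub
          (((hX2 (s + h)).integrable one_le_two).const_mul μX)
      · exact integrable_const _
    intro h0 h
    set f : Ω → ℝ := fun ω => (X t ω : ℝ) - μX with hfdef
    set g : Ω → ℝ := fun ω => (X (t + h) ω : ℝ) - μX with hgdef
    have hf2 : MemLp f 2 μ := (hX2 t).sub (memLp_const μX)
    have hg2 : MemLp g 2 μ := (hX2 (t + h)).sub (memLp_const μX)
    have e1 : ∫ ω, f ω * f ω ∂μ = 0 := by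
      have := hcov2 t 0; simp only [add_zero, Int.natAbs_zero, h0] at this
      simpa [hfdef] using this
    have e2 : ∫ ω, g ω * g ω ∂μ = 0 := by
      have := hcov2 (t + h) 0; simp only [add_zero, Int.natAbs_zero, h0] at this
      simpa [hgdef] using this
    have e3 : ∫ ω, f ω * g ω ∂μ = γ h.natAbs := hcov2 t h
    have key : ∀ c : ℝ, 0 ≤ (∫ ω, f ω * f ω ∂μ) - 2 * c * (∫ ω, f ω * g ω ∂μ)
        + c ^ 2 * (∫ ω, g ω * g ω ∂μ) := by
      intro c
      have expand : (fun ω => (f ω - c * g ω) ^ 2)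
          = fun ω => f ω * f ω - 2 * c * (f ω * g ω) + c ^ 2 * (g ω * g ω) :=
        funext fun ω => by ring
      have hnonneg : 0 ≤ ∫ ω, (f ω - c * g ω) ^ 2 ∂μ :=
        integral_nonneg fun ω => sq_nonneg _
      rw [expand, integral_add, integral_sub, integral_const_mul, integral_const_mul] at hnonneg
      · exact hnonneg
      · exact hL2mul f f hf2 hf2
      · exact (hL2mul f g hf2 hg2).const_mul _
      · exact (hL2mul f f hf2 hf2).sub ((hL2mul f g hf2 hg2).const_mul _)
      · exact (hL2mul g g hg2 hg2).const_mul _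
    have := key (γ h.natAbs)
    rw [e1, e2, e3] at this
    nlinarith [sq_nonneg (γ h.natAbs)]
  have hstats : ∀ n : Fin p → ℕ,
      (∫ ω, ((∑ j, ∑ m ∈ Finset.Icc 1 (n j), (Y j m ω : ℝ)) + (ε ω : ℝ)) ∂μ
        = (∑ j, α j * (n j : ℝ)) + ∫ ω', (ε ω' : ℝ) ∂μ) ∧
      (∫ ω, ((∑ j, ∑ m ∈ Finset.Icc 1 (n j), (Y j m ω : ℝ)) + (ε ω : ℝ)) ^ 2 ∂μ
        = ((∑ j, β j * (n j : ℝ)) + σε2)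
          + ((∑ j, α j * (n j : ℝ)) + ∫ ω', (ε ω' : ℝ) ∂μ) ^ 2) := by
    classical
    have hcast : Measurable (fun k : ℕ => (k : ℝ)) := measurable_from_top
    set W : Option ((_ : Fin p) × ℕ) → Ω → ℝ :=
      fun o => Option.elim o (fun ω => (ε ω : ℝ)) (fun q ω => (Y q.1 q.2 ω : ℝ)) with hW
    -- comap inequalities
    have hleY : ∀ (j : Fin p) (m : ℕ),
        MeasurableSpace.comap (fun ω => (Y j m ω : ℝ)) inferInstance ≤
          MeasurableSpace.comap (fun ω (m' : ℕ) => Y j m' ω) MeasurableSpace.pi := by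
      intro j m
      have h1 : @Measurable Ω (ℕ → ℕ)
          (MeasurableSpace.comap (fun ω (m' : ℕ) => Y j m' ω) MeasurableSpace.pi) _
          (fun ω (m' : ℕ) => Y j m' ω) := Measurable.of_comap_le le_rfl
      have h2 : @Measurable Ω ℕ
          (MeasurableSpace.comap (fun ω (m' : ℕ) => Y j m' ω) MeasurableSpace.pi) _
          (Y j m) := (measurable_pi_apply m).comp h1
      exact Measurable.comap_le (hcast.comp h2)
    have hleε : MeasurableSpace.comap (fun ω => (ε ω : ℝ)) inferInstance ≤
        MeasurableSpace.comap ε inferInstance := by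
      apply Measurable.comap_le
      exact hcast.comp (Measurable.of_comap_le le_rfl)
    have hWindep : ∀ q q' : Option ((_ : Fin p) × ℕ), q ≠ q' → IndepFun (W q) (W q') μ := by
      intro q q' hne
      match q, q' with
      | none, none => exact absurd rfl hne
      | none, some q' =>
        have h := hmut.indep (i := none) (j := some q'.1) (by simp)
        exact indep_of_indep_of_le_right (indep_of_indep_of_le_left h hleε) (hleY q'.1 q'.2)
      | some q, none =>
        have h := hmut.indep (i := some q.1) (j := none) (by simp)
        exact indep_of_indep_of_le_right (indep_of_indep_of_le_left h (hleY q.1 q.2)) hleε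
      | some q, some q' =>
        by_cases hj : q.1 = q'.1
        · obtain ⟨j, m⟩ := q
          obtain ⟨j', m'⟩ := q'
          simp only at hj
          subst hj
          have hm : m ≠ m' := by
            intro hmm; exact hne (by simp [hmm])
          exact ((hYiid j).indepFun hm).comp hcast hcast
        · have h := hmut.indep (i := some q.1) (j := some q'.1) (by simpa using hj)
          exact indep_of_indep_of_le_right (indep_of_indep_of_le_left h (hleY q.1 q.2))
            (hleY q'.1 q'.2)
    intro n
    set S : Finset (Option ((_ : Fin p) × ℕ)) :=
      (Finset.univ.sigma fun j : Fin p => Finset.Icc 1 (n j)).insertNone with hS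
    have hW2 : ∀ q ∈ S, MemLp (W q) 2 μ := by
      rintro (_ | q) _
      · exact hε2
      · exact hY2 q.1 q.2
    have hZeq : (fun ω => (∑ j, ∑ m ∈ Finset.Icc 1 (n j), (Y j m ω : ℝ)) + (ε ω : ℝ))
        = ∑ q ∈ S, W q := by
      funext ω
      rw [Finset.sum_apply, hS, Finset.sum_insertNone, Finset.sum_sigma]
      simp [hW, add_comm]
    have hZint : ∀ q ∈ S, Integrable (W q) μ := fun q hq => (hW2 q hq).integrable one_le_two
    have hcard : ∀ j : Fin p, (Finset.Icc 1 (n j)).card = n j := by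
      intro j; rw [Nat.card_Icc]; omega
    have hmean : ∫ ω, (∑ q ∈ S, W q) ω ∂μ = (∑ j, α j * (n j : ℝ)) + ∫ ω, (ε ω : ℝ) ∂μ := by
      have hsum : ∫ ω, (∑ q ∈ S, W q) ω ∂μ = ∑ q ∈ S, ∫ ω, W q ω ∂μ := by
        simp only [Finset.sum_apply]; exact integral_finset_sum S hZint
      rw [hsum]
      rw [hS, Finset.sum_insertNone, Finset.sum_sigma]
      simp only [hW, Option.elim]
      rw [add_comm]
      congr 1
      refine Finset.sum_congr rfl fun j _ => ?_
      rw [Finset.sum_congr rfl fun m _ => hYmean j m, Finset.sum_const, hcard, nsmul_eq_mul, mul_comm]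
    have hvar : variance (∑ q ∈ S, W q) μ = (∑ j, β j * (n j : ℝ)) + σε2 := by
      rw [IndepFun.variance_sum hW2 (fun q _ q' _ hne => hWindep q q' hne)]
      rw [hS, Finset.sum_insertNone, Finset.sum_sigma]
      simp only [hW, Option.elim]
      rw [add_comm, hεvar]
      congr 1
      refine Finset.sum_congr rfl fun j _ => ?_
      rw [Finset.sum_congr rfl fun m _ => hYvar j m, Finset.sum_const, hcard, nsmul_eq_mul, mul_comm]
    constructor
    · rw [show (fun ω => (∑ j, ∑ m ∈ Finset.Icc 1 (n j), (Y j m ω : ℝ)) + (ε ω : ℝ))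
          = ∑ q ∈ S, W q from hZeq]
      exact hmean
    · have hZ2 : MemLp (∑ q ∈ S, W q) 2 μ := memLp_finset_sum' S hW2
      have := variance_eq_sub hZ2
      rw [hvar] at this
      have hsq : ∫ ω, ((∑ q ∈ S, W q) ω) ^ 2 ∂μ
          = ((∑ j, β j * (n j : ℝ)) + σε2) + (∫ ω, (∑ q ∈ S, W q) ω ∂μ) ^ 2 := by
        simp only [Pi.pow_apply] at this
        linarith [this]
      rw [show (fun ω => ((∑ j, ∑ m ∈ Finset.Icc 1 (n j), (Y j m ω : ℝ)) + (ε ω : ℝ)) ^ 2)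
          = fun ω => ((∑ q ∈ S, W q) ω) ^ 2 by rw [← hZeq]]
      rw [hsq, hmean]
  have hC : (∫ ω, (X t ω : ℝ) ∂μ
        = (∑ j : Fin p, α j * μX) + (∫ ω', (ε ω' : ℝ) ∂μ)) ∧
    (∫ ω, (X t ω : ℝ) ^ 2 ∂μ
        = ((∑ j : Fin p, β j * μX) + σε2)
          + ∫ ω, ((∑ j : Fin p, α j * (X (t - ((j : ℕ) + 1)) ω : ℝ)) + (∫ ω', (ε ω' : ℝ) ∂μ)) ^ 2 ∂μ) := by
    classical
    have hcast : Measurable (fun k : ℕ => (k : ℝ)) := measurable_from_top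
    set U : Ω → (Fin p × ℕ → ℕ) × ℕ :=
      fun ω => ((fun jm : Fin p × ℕ => Y jm.1 jm.2 ω), ε ω) with hU
    set V : Ω → (Fin p → ℕ) := fun ω => fun j : Fin p => X (t - ((j : ℕ) + 1)) ω with hV
    have hUm : Measurable U :=
      (measurable_pi_lambda _ fun jm : Fin p × ℕ => hYmeas jm.1 jm.2).prodMk hεmeas
    have hVm : Measurable V := measurable_pi_lambda _ fun j => hXmeas _
    set g : ((Fin p × ℕ → ℕ) × ℕ) × (Fin p → ℕ) → ℝ :=
      fun z => (∑ j : Fin p, ∑ m ∈ Finset.Icc 1 (z.2 j), (z.1.1 (j, m) : ℝ)) + (z.1.2 : ℝ)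
      with hg
    have hgm : Measurable g := by
      apply Measurable.add
      · apply Finset.measurable_sum
        intro j _
        have hk : Measurable (fun y : (Fin p × ℕ → ℕ) × ℕ =>
            ∑ m ∈ Finset.Icc 1 y.2, (y.1 (j, m) : ℝ)) := by
          apply measurable_from_prod_countable_left
          intro c
          show Measurable fun y : Fin p × ℕ → ℕ => ∑ m ∈ Finset.Icc 1 c, ((y (j, m) : ℕ) : ℝ)
          exact Finset.measurable_sum _ fun m _ =>
            (hcast.comp (measurable_pi_apply (j, m)) :
              Measurable fun y : Fin p × ℕ → ℕ => ((y (j, m) : ℕ) : ℝ))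
        exact hk.comp ((measurable_fst.comp measurable_fst).prodMk
          ((measurable_pi_apply j).comp measurable_snd))
      · exact hcast.comp (measurable_snd.comp measurable_fst)
    have hXtg : ∀ ω, (X t ω : ℝ) = g (U ω, V ω) := by
      intro ω
      rw [hstruct ω]
      push_cast
      rfl
    have hprodeq : μ.map (fun ω => (U ω, V ω)) = (μ.map U).prod (μ.map V) :=
      (indepFun_iff_map_prod_eq_prod_map_map hUm.aemeasurable hVm.aemeasurable).mp hindep
    have key : ∀ h : (((Fin p × ℕ → ℕ) × ℕ) × (Fin p → ℕ)) → ℝ, Measurable h →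
        Integrable (fun ω => h (U ω, V ω)) μ →
        (∫ ω, h (U ω, V ω) ∂μ) = ∫ v, (∫ ω, h (U ω, v) ∂μ) ∂(μ.map V) := by
      intro h hm hint
      have h1 : ∫ ω, h (U ω, V ω) ∂μ = ∫ z, h z ∂(μ.map fun ω => (U ω, V ω)) :=
        (integral_map (hUm.prodMk hVm).aemeasurable hm.aestronglyMeasurable).symm
      rw [h1, hprodeq]
      have hint2 : Integrable h ((μ.map U).prod (μ.map V)) := by
        rw [← hprodeq]
        exact (integrable_map_measure hm.aestronglyMeasurable
          (hUm.prodMk hVm).aemeasurable).mpr hint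
      rw [integral_prod_symm h hint2]
      refine integral_congr_ae (Filter.Eventually.of_forall fun v => ?_)
      exact integral_map hUm.aemeasurable
        (hm.comp (measurable_id.prodMk measurable_const)).aestronglyMeasurable
    have hslice : ∀ (v : Fin p → ℕ) ω,
        g (U ω, v) = (∑ j, ∑ m ∈ Finset.Icc 1 (v j), (Y j m ω : ℝ)) + (ε ω : ℝ) := by
      intro v ω; rfl
    have hNint : ∀ j : Fin p,
        Integrable (fun ω => α j * (X (t - ((j : ℕ) + 1)) ω : ℝ)) μ :=
      fun j => ((hX2 _).integrable one_le_two).const_mul _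
    -- mean
    have hmean : ∫ ω, (X t ω : ℝ) ∂μ = (∑ j : Fin p, α j * μX) + (∫ ω', (ε ω' : ℝ) ∂μ) := by
      have hint : Integrable (fun ω => g (U ω, V ω)) μ :=
        ((hX2 t).integrable one_le_two).congr
          (Filter.Eventually.of_forall fun ω => hXtg ω)
      have h1 : ∫ ω, (X t ω : ℝ) ∂μ = ∫ ω, g (U ω, V ω) ∂μ :=
        integral_congr_ae (Filter.Eventually.of_forall fun ω => hXtg ω)
      rw [h1, key g hgm hint]
      have h2 : (fun v : Fin p → ℕ => ∫ ω, g (U ω, v) ∂μ)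
          = fun v => (∑ j, α j * (v j : ℝ)) + (∫ ω', (ε ω' : ℝ) ∂μ) := by
        funext v
        rw [show (fun ω => g (U ω, v))
            = fun ω => (∑ j, ∑ m ∈ Finset.Icc 1 (v j), (Y j m ω : ℝ)) + (ε ω : ℝ) from
          funext (hslice v)]
        exact (hstats v).1
      rw [h2]
      have hφm : Measurable (fun v : Fin p → ℕ => (∑ j, α j * (v j : ℝ)) + (∫ ω', (ε ω' : ℝ) ∂μ)) :=
        (Finset.measurable_sum _ fun j _ =>
          (hcast.comp (measurable_pi_apply j)).const_mul _).add_const _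
      rw [integral_map hVm.aemeasurable hφm.aestronglyMeasurable]
      rw [integral_add, integral_finset_sum]
      · simp only [integral_const, measure_univ, probReal_univ, ENNReal.toReal_one, smul_eq_mul, one_mul]
        congr 1
        refine Finset.sum_congr rfl fun j _ => ?_
        rw [integral_const_mul, hXmean]
      · intro j _
        exact hNint j
      · exact integrable_finset_sum _ fun j _ => hNint j
      · exact integrable_const _
    refine ⟨hmean, ?_⟩
    -- second moment
    have hA2 : MemLp (fun ω => (∑ j : Fin p, α j * (X (t - ((j : ℕ) + 1)) ω : ℝ)) + (∫ ω', (ε ω' : ℝ) ∂μ)) 2 μ := by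
      apply MemLp.add
      · exact memLp_finset_sum _ fun j _ => (hX2 _).const_mul _
      · exact memLp_const (∫ ω', (ε ω' : ℝ) ∂μ)
    have hint2 : Integrable (fun ω => (g (U ω, V ω)) ^ 2) μ :=
      ((hX2 t).integrable_sq).congr
        (Filter.Eventually.of_forall fun ω => by simp only [hXtg ω])
    have h1 : ∫ ω, (X t ω : ℝ) ^ 2 ∂μ = ∫ ω, (g (U ω, V ω)) ^ 2 ∂μ :=
      integral_congr_ae (Filter.Eventually.of_forall fun ω => by simp only [hXtg ω])
    rw [h1, key (fun z => (g z) ^ 2) (hgm.pow_const 2) hint2]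
    have h2 : (fun v : Fin p → ℕ => ∫ ω, (g (U ω, v)) ^ 2 ∂μ)
        = fun v => ((∑ j, β j * (v j : ℝ)) + σε2) + ((∑ j, α j * (v j : ℝ)) + (∫ ω', (ε ω' : ℝ) ∂μ)) ^ 2 := by
      funext v
      rw [show (fun ω => (g (U ω, v)) ^ 2)
          = fun ω => ((∑ j, ∑ m ∈ Finset.Icc 1 (v j), (Y j m ω : ℝ)) + (ε ω : ℝ)) ^ 2 from
        funext fun ω => by rw [hslice v ω]]
      exact (hstats v).2
    rw [h2]
    have hφm : Measurable (fun v : Fin p → ℕ =>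
        ((∑ j, β j * (v j : ℝ)) + σε2) + ((∑ j, α j * (v j : ℝ)) + (∫ ω', (ε ω' : ℝ) ∂μ)) ^ 2) := by
      apply Measurable.add
      · exact (Finset.measurable_sum _ fun j _ =>
          (hcast.comp (measurable_pi_apply j)).const_mul _).add_const _
      · exact ((Finset.measurable_sum _ fun j _ =>
          (hcast.comp (measurable_pi_apply j)).const_mul _).add_const _).pow_const 2
    rw [integral_map hVm.aemeasurable hφm.aestronglyMeasurable]
    rw [integral_add, integral_add, integral_finset_sum]
    · simp only [integral_const, measure_univ, probReal_univ, ENNReal.toReal_one, smul_eq_mul, one_mul]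
      congr 2
      · refine Finset.sum_congr rfl fun j _ => ?_
        rw [integral_const_mul]
        have : ∫ ω, (X (t - ((j : ℕ) + 1)) ω : ℝ) ∂μ = μX := hXmean _
        rw [show (fun ω => ((V ω j : ℕ) : ℝ)) = fun ω => (X (t - ((j : ℕ) + 1)) ω : ℝ) from rfl,
          this]
    · intro j _
      exact ((hX2 _).integrable one_le_two).const_mul _
    · exact integrable_finset_sum _ fun j _ =>
        ((hX2 _).integrable one_le_two).const_mul _
    · exact integrable_const _
    · exact (integrable_finset_sum _ fun j _ =>
        ((hX2 _).integrable one_le_two).const_mul _).add (integrable_const _)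
    · exact hA2.integrable_sq
  obtain ⟨hC1, hC2⟩ := hC
  have hμXeq : μX = (∑ j : Fin p, α j * μX) + (∫ ω', (ε ω' : ℝ) ∂μ) := by
    rw [hXmean t] at hC1; exact hC1
  have covjk : ∀ j k : Fin p,
      ∫ ω, (X (t - ((j : ℕ) + 1)) ω : ℝ) * (X (t - ((k : ℕ) + 1)) ω : ℝ) ∂μ
        = γ (((j : ℕ) : ℤ) - ((k : ℕ) : ℤ)).natAbs + μX * μX := by
    intro j k
    have harg : t - ((j : ℕ) + 1) + (((j : ℕ) : ℤ) - ((k : ℕ) : ℤ)) = t - ((k : ℕ) + 1) := by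
      push_cast; ring
    have h1 := hXcov (t - ((j : ℕ) + 1)) (((j : ℕ) : ℤ) - ((k : ℕ) : ℤ))
    rw [harg, hXmean, hXmean] at h1
    linarith
  have hrecj : ∀ j : Fin p, γ ((j : ℕ) + 1)
      = ∑ k : Fin p, α k * γ ((((j : ℕ) : ℤ) - ((k : ℕ) : ℤ)).natAbs) := by
    intro j
    rw [hrec ((j : ℕ) + 1) (Nat.le_add_left 1 _) (by have := j.isLt; omega)]
    refine Finset.sum_congr rfl fun k _ => ?_
    have harg : ((((j : ℕ) + 1 : ℕ) : ℤ) - (((k : ℕ) : ℤ) + 1))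
        = (((j : ℕ) : ℤ) - ((k : ℕ) : ℤ)) := by push_cast; ring
    rw [harg]
  -- expansion of the quadratic term
  have hQ : ∫ ω, ((∑ j : Fin p, α j * (X (t - ((j : ℕ) + 1)) ω : ℝ)) + (∫ ω', (ε ω' : ℝ) ∂μ)) ^ 2 ∂μ
      = (∑ j : Fin p, ∑ k : Fin p,
          α j * α k * (γ ((((j : ℕ) : ℤ) - ((k : ℕ) : ℤ)).natAbs) + μX * μX))
        + (2 * (∫ ω', (ε ω' : ℝ) ∂μ) * (∑ j : Fin p, α j * μX) + (∫ ω', (ε ω' : ℝ) ∂μ) ^ 2) := by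
    have hpt : (fun ω => ((∑ j : Fin p, α j * (X (t - ((j : ℕ) + 1)) ω : ℝ)) + (∫ ω', (ε ω' : ℝ) ∂μ)) ^ 2)
        = fun ω => (∑ j : Fin p, ∑ k : Fin p,
            (α j * (X (t - ((j : ℕ) + 1)) ω : ℝ)) * (α k * (X (t - ((k : ℕ) + 1)) ω : ℝ)))
          + (2 * (∫ ω', (ε ω' : ℝ) ∂μ) * (∑ j : Fin p, α j * (X (t - ((j : ℕ) + 1)) ω : ℝ))
            + (∫ ω', (ε ω' : ℝ) ∂μ) ^ 2) := by
      funext ω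
      have e := Finset.sum_mul_sum (Finset.univ) (Finset.univ)
        (fun j : Fin p => α j * (X (t - ((j : ℕ) + 1)) ω : ℝ))
        (fun k : Fin p => α k * (X (t - ((k : ℕ) + 1)) ω : ℝ))
      calc ((∑ j : Fin p, α j * (X (t - ((j : ℕ) + 1)) ω : ℝ)) + (∫ ω', (ε ω' : ℝ) ∂μ)) ^ 2
          = (∑ j : Fin p, α j * (X (t - ((j : ℕ) + 1)) ω : ℝ))
              * (∑ k : Fin p, α k * (X (t - ((k : ℕ) + 1)) ω : ℝ))
            + (2 * (∫ ω', (ε ω' : ℝ) ∂μ) * (∑ j : Fin p, α j * (X (t - ((j : ℕ) + 1)) ω : ℝ))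
              + (∫ ω', (ε ω' : ℝ) ∂μ) ^ 2) := by ring
        _ = _ := by rw [e]
    rw [hpt]
    have hintjk : ∀ (j : Fin p), ∀ k : Fin p, Integrable (fun ω =>
        (α j * (X (t - ((j : ℕ) + 1)) ω : ℝ)) * (α k * (X (t - ((k : ℕ) + 1)) ω : ℝ))) μ :=
      fun j k => hL2mul _ _ ((hX2 _).const_mul _) ((hX2 _).const_mul _)
    rw [integral_add, integral_add, integral_finset_sum]
    · congr 1
      · refine Finset.sum_congr rfl fun j _ => ?_
        rw [integral_finset_sum _ fun k _ => hintjk j k]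
        refine Finset.sum_congr rfl fun k _ => ?_
        have hpt2 : (fun ω => (α j * (X (t - ((j : ℕ) + 1)) ω : ℝ))
            * (α k * (X (t - ((k : ℕ) + 1)) ω : ℝ)))
            = fun ω => (α j * α k)
              * ((X (t - ((j : ℕ) + 1)) ω : ℝ) * (X (t - ((k : ℕ) + 1)) ω : ℝ)) :=
          funext fun ω => by ring
        rw [hpt2, integral_const_mul, covjk j k]
      · congr 1
        · rw [integral_const_mul, integral_finset_sum _ fun j _ =>
            ((hX2 _).integrable one_le_two).const_mul _]
          congr 1
          refine Finset.sum_congr rfl fun j _ => ?_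
          rw [integral_const_mul, hXmean]
        · simp
    all_goals first
      | (intro j hj; exact integrable_finset_sum _ fun k _ => hintjk j k)
      | exact integrable_finset_sum _ fun j _ => integrable_finset_sum _ fun k _ => hintjk j k
      | exact (integrable_finset_sum _ fun j _ =>
          ((hX2 _).integrable one_le_two).const_mul _).const_mul _
      | exact integrable_const _
      | exact ((integrable_finset_sum _ fun j _ =>
          ((hX2 _).integrable one_le_two).const_mul _).const_mul _).add (integrable_const _)
  have hIXX : ∫ ω, (X t ω : ℝ) * (X t ω : ℝ) ∂μ = γ 0 + μX * μX := by
    have h1 := hXcov t 0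
    simp only [add_zero, Int.natAbs_zero] at h1
    rw [hXmean t] at h1
    linarith
  have hsqmul : ∫ ω, (X t ω : ℝ) ^ 2 ∂μ = ∫ ω, (X t ω : ℝ) * (X t ω : ℝ) ∂μ :=
    integral_congr_ae (Filter.Eventually.of_forall fun ω => by ring)
  have hsum1 : (∑ j : Fin p, α j * γ ((j : ℕ) + 1))
      = ∑ j : Fin p, ∑ k : Fin p, α j * α k * γ ((((j : ℕ) : ℤ) - ((k : ℕ) : ℤ)).natAbs) := by
    refine Finset.sum_congr rfl fun j _ => ?_
    rw [hrecj j, Finset.mul_sum]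
    exact Finset.sum_congr rfl fun k _ => (mul_assoc _ _ _).symm
  have hsum2 : (∑ j : Fin p, ∑ k : Fin p, α j * α k * (μX * μX))
      = (∑ j : Fin p, α j * μX) * (∑ j : Fin p, α j * μX) := by
    rw [Finset.sum_mul_sum]
    exact Finset.sum_congr rfl fun j _ => Finset.sum_congr rfl fun k _ => by ring
  have hsplit : (∑ j : Fin p, ∑ k : Fin p,
        α j * α k * (γ ((((j : ℕ) : ℤ) - ((k : ℕ) : ℤ)).natAbs) + μX * μX))
      = (∑ j : Fin p, ∑ k : Fin p, α j * α k * γ ((((j : ℕ) : ℤ) - ((k : ℕ) : ℤ)).natAbs))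
        + ∑ j : Fin p, ∑ k : Fin p, α j * α k * (μX * μX) := by
    simp_rw [mul_add, Finset.sum_add_distrib]
  have hmm : μX * μX = (∑ j : Fin p, α j * μX) * (∑ j : Fin p, α j * μX)
      + 2 * (∫ ω', (ε ω' : ℝ) ∂μ) * (∑ j : Fin p, α j * μX) + (∫ ω', (ε ω' : ℝ) ∂μ) ^ 2 := by
    have h := hμXeq
    generalize (∑ j : Fin p, α j * μX) = A0 at h ⊢
    generalize (∫ ω', ((ε ω' : ℕ) : ℝ) ∂μ) = c at h ⊢
    rw [h]; ring
  have part1 : γ 0 = (∑ j, α j * γ ((j : ℕ) + 1)) + ((∑ j, β j * μX) + σε2) := by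
    rw [hsqmul] at hC2
    rw [hIXX, hQ, hsplit, ← hsum1, hsum2] at hC2
    linarith
  refine ⟨part1, ?_⟩
  intro hlt
  by_cases h0 : γ 0 = 0
  · have hz : ∀ j : Fin p, γ ((j : ℕ) + 1) = 0 := by
      intro j
      have h1 := hzero h0 ((((j : ℕ) + 1 : ℕ)) : ℤ)
      rwa [Int.natAbs_natCast] at h1
    have hB : (∑ j, β j * μX) + σε2 = 0 := by
      rw [h0] at part1
      simp only [hz, mul_zero, Finset.sum_const_zero, zero_add] at part1
      linarith
    rw [h0, hB]
    simp [hz, h0]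
  · have hpos : 0 < 1 - ∑ j, α j * (γ ((j : ℕ) + 1) / γ 0) := by linarith
    rw [eq_div_iff (ne_of_gt hpos)]
    have hmulsum : γ 0 * (∑ j, α j * (γ ((j : ℕ) + 1) / γ 0))
        = ∑ j, α j * γ ((j : ℕ) + 1) := by
      rw [Finset.mul_sum]
      refine Finset.sum_congr rfl fun j _ => ?_
      field_simp
    have : γ 0 * (1 - ∑ j, α j * (γ ((j : ℕ) + 1) / γ 0))
        = γ 0 - ∑ j, α j * γ ((j : ℕ) + 1) := by
      rw [mul_sub, mul_one, hmulsum]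
    rw [this]
    linarith
end
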